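/- arXiv:1709.09985 — 3 statements merged into one kernel-verified Lean document; each statement's English description precedes it below -/
import Mathlib

section
/- Let G be a finite simple graph, R a graph possibly with loops on K nodes, and (V_u)_{u∈V(R)} a partition of V(G). Then there exist subsets S₁, …, S_t of V(G) with t ≤ K + K(K−1)/2 such that G^R is obtained from G by successively complementing on S₁, then S₂, …, then S_t. -/
/-- The graph `G^R`: given a graph `R` possibly with loops on a node type `ι`
(presented as a relation) and a partition of `V(G)` indexed by the nodes of `R`
(presented as `p : V → ι`, the part `V_u` being `p ⁻¹' {u}`), two distinct
vertices are adjacent in `G^R` iff exactly one of the following holds: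
they are adjacent in `G`, or their parts are adjacent in `R`. -/
def SimpleGraph.patternApply {V ι : Type*} (G : SimpleGraph V) (R : ι → ι → Prop)
    (p : V → ι) : SimpleGraph V where
  Adj v w := v ≠ w ∧ Xor' (G.Adj v w) (R (p v) (p w) ∨ R (p w) (p v))
  symm := ⟨by
    rintro v w ⟨h1, h2⟩
    refine ⟨h1.symm, ?_⟩
    rwa [G.adj_comm, or_comm] at h2⟩
  loopless := ⟨fun v h => h.1 rfl⟩

/-- A pattern: a graph possibly with loops (a symmetric relation on nodes) with
no pair of adjacent twins both having loops and no pair of non-adjacent twins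
neither of which has a loop. -/
def IsPattern {ι : Type*} (R : ι → ι → Prop) : Prop :=
  Symmetric R ∧ ∀ u₁ u₂ : ι, u₁ ≠ u₂ →
    (∀ w : ι, w ≠ u₁ → w ≠ u₂ → (R u₁ w ↔ R u₂ w)) →
    ¬((R u₁ u₂ ∧ R u₁ u₁ ∧ R u₂ u₂) ∨ (¬R u₁ u₂ ∧ ¬R u₁ u₁ ∧ ¬R u₂ u₂))

/-- `G` is `d`-degenerate: the vertices can be linearly ordered (via an injection
into `ℕ`) so that every vertex has at most `d` neighbors preceding it. -/
def SimpleGraph.Degenerate {V : Type*} (G : SimpleGraph V) (d : ℕ) : Prop :=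
  ∃ f : V → ℕ, Function.Injective f ∧ ∀ v : V, {w : V | G.Adj v w ∧ f w < f v}.ncard ≤ d

/-- Two sets of vertices are `k`-similar if their symmetric difference has at
most `k` elements. -/
def KSimilar {V : Type*} (k : ℕ) (X Y : Set V) : Prop := (symmDiff X Y).ncard ≤ k

/-- The `k`-similarity graph of `H`: two distinct vertices are adjacent iff
their neighborhoods are `k`-similar. -/
def simGraph {V : Type*} (H : SimpleGraph V) (k : ℕ) : SimpleGraph V where
  Adj v w := v ≠ w ∧ KSimilar k (H.neighborSet v) (H.neighborSet w)
  symm := ⟨by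
    rintro v w ⟨h1, h2⟩
    exact ⟨h1.symm, by rwa [KSimilar, symmDiff_comm]⟩⟩
  loopless := ⟨fun v h => h.1 rfl⟩

/-- The `u`-perfect set: the union of the parts `V_{u'}` over all neighbors
`u'` of `u` in `R`. -/
def perfectSet {V ι : Type*} (R : ι → ι → Prop) (p : V → ι) (u : ι) : Set V :=
  {v : V | R u (p v)}

/-- A vertex `v` is `(u,k)`-perfect if its neighborhood in `G^R` is `k`-similar
to the `u`-perfect set. -/
def PerfectVtx {V ι : Type*} (G : SimpleGraph V) (R : ι → ι → Prop) (p : V → ι)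
    (u : ι) (k : ℕ) (v : V) : Prop :=
  KSimilar k ((G.patternApply R p).neighborSet v) (perfectSet R p u)

/-- Complementing a graph on a subset `S` of its vertices: adjacency between
distinct vertices of `S` is flipped, all other adjacencies are unchanged. -/
def complementOn {V : Type*} (G : SimpleGraph V) (S : Set V) : SimpleGraph V where
  Adj v w := v ≠ w ∧ Xor' (G.Adj v w) (v ∈ S ∧ w ∈ S)
  symm := ⟨by
    rintro v w ⟨h1, h2⟩
    refine ⟨h1.symm, ?_⟩
    rwa [G.adj_comm, and_comm] at h2⟩
  loopless := ⟨fun v h => h.1 rfl⟩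

open Classical in
lemma foldl_complementOn_adj {V : Type*} (G : SimpleGraph V) (L : List (Set V)) (v w : V) :
    (L.foldl complementOn G).Adj v w ↔
      v ≠ w ∧ Xor' (G.Adj v w) (Odd (L.countP (fun S => decide (v ∈ S ∧ w ∈ S)))) := by
  induction L generalizing G with
  | nil =>
    simp only [List.foldl_nil, List.countP_nil]
    have : ¬ Odd 0 := by decide
    unfold Xor'
    constructor
    · intro h; exact ⟨h.ne, Or.inl ⟨h, this⟩⟩
    · rintro ⟨hne, ⟨h, _⟩ | ⟨h, _⟩⟩
      · exact h
      · exact absurd h this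
  | cons S L ih =>
    rw [List.foldl_cons, ih]
    simp only [List.countP_cons, decide_eq_true_eq]
    by_cases hb : v ∈ S ∧ w ∈ S
    · rw [if_pos hb]
      have h1 : Odd (L.countP (fun S => decide (v ∈ S ∧ w ∈ S)) + 1) ↔
          ¬ Odd (L.countP (fun S => decide (v ∈ S ∧ w ∈ S))) := by
        rw [Nat.odd_add_one, Nat.not_odd_iff_even]
      change (v ≠ w ∧ Xor' (v ≠ w ∧ Xor' (G.Adj v w) (v ∈ S ∧ w ∈ S)) _) ↔ _
      unfold Xor' Xor
      tauto
    · rw [if_neg hb, add_zero]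
      change (v ≠ w ∧ Xor' (v ≠ w ∧ Xor' (G.Adj v w) (v ∈ S ∧ w ∈ S)) _) ↔ _
      unfold Xor' Xor
      tauto

open Classical in
lemma countP_toList {α : Type*} (s : Finset α) (q : α → Prop) :
    s.toList.countP (fun a => decide (q a)) = (s.filter q).card := by
  rw [← Multiset.coe_countP, Finset.coe_toList, Multiset.countP_eq_card_filter, Finset.card, Finset.filter_val]

open Classical in
lemma countP_toList_bool {α : Type*} (s : Finset α) (q : α → Bool) :
    s.toList.countP q = (s.filter (fun a => q a = true)).card := by
  have h := countP_toList s (fun a => q a = true)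
  have e1 : (fun a => @decide (q a = true) (Classical.propDecidable _)) = q := by
    funext a
    cases hq : q a
    · exact @decide_eq_false _ (Classical.propDecidable _) (by simp [hq])
    · exact @decide_eq_true _ (Classical.propDecidable _) (by simp [hq])
  rw [e1] at h
  rw [h]
  congr!



/-- if `R` has `K` nodes, then `G^R` can be obtained from `G` by
successively complementing on at most `K + K(K−1)/2` subsets of `V(G)`. -/
theorem stmt10 {V ι : Type*} [Fintype V] [Fintype ι] (K : ℕ) (hK : Fintype.card ι = K)
    (G : SimpleGraph V) (R : ι → ι → Prop) (hR : Symmetric R) (p : V → ι) :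
    ∃ L : List (Set V), L.length ≤ K + K * (K - 1) / 2 ∧
      L.foldl complementOn G = G.patternApply R p := by
  classical
  set P : Finset (Sym2 ι) := Finset.univ.filter (fun e => ¬ e.IsDiag ∧ e ∈ Sym2.fromRel (⟨fun a b h => hR h⟩ : Std.Symm R)) with hP
  set deg : ι → ℕ := fun u => (P.filter (fun e => u ∈ e)).card with hdeg
  set B : Finset ι := Finset.univ.filter (fun u => Xor' (Odd (deg u)) (R u u)) with hB
  refine ⟨P.toList.map (fun e => {v | p v ∈ e}) ++ B.toList.map (fun u => p ⁻¹' {u}), ?_, ?_⟩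
  · rw [List.length_append, List.length_map, List.length_map, Finset.length_toList,
      Finset.length_toList]
    have h1 : P.card ≤ K * (K - 1) / 2 := by
      have hle : P.card ≤ (Finset.univ.filter (fun e : Sym2 ι => ¬ e.IsDiag)).card := by
        apply Finset.card_le_card
        intro e he
        rw [hP, Finset.mem_filter] at he
        exact Finset.mem_filter.mpr ⟨he.1, he.2.1⟩
      calc P.card ≤ _ := hle
        _ = Fintype.card {e : Sym2 ι // ¬ e.IsDiag} := (Fintype.card_subtype _).symm
        _ = (Fintype.card ι).choose 2 := Sym2.card_subtype_not_diag
        _ = K * (K - 1) / 2 := by rw [hK, Nat.choose_two_right]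
    have h2 : B.card ≤ K := by
      rw [← hK, ← Finset.card_univ]
      exact Finset.card_le_card (Finset.filter_subset _ _)
    omega
  · ext v w
    rw [foldl_complementOn_adj]
    show _ ↔ (v ≠ w ∧ Xor' (G.Adj v w) (R (p v) (p w) ∨ R (p w) (p v)))
    refine and_congr_right fun hvw => ?_
    have hor : (R (p v) (p w) ∨ R (p w) (p v)) ↔ R (p v) (p w) :=
      ⟨fun h => h.elim id (fun h => hR h), Or.inl⟩
    rw [hor]
    have xcongr : ∀ {a b c : Prop}, (b ↔ c) → (Xor' a b ↔ Xor' a c) := by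
      intro a b c h
      unfold Xor' Xor
      tauto
    refine xcongr ?_
    rw [List.countP_append, List.countP_map, List.countP_map]
    have hc1 : (P.toList.countP ((fun S => decide (v ∈ S ∧ w ∈ S)) ∘ (fun e => {x | p x ∈ e})))
        = (P.filter (fun e => p v ∈ e ∧ p w ∈ e)).card := by
      rw [countP_toList_bool]
      apply congrArg Finset.card
      apply Finset.filter_congr
      intro e _
      simp only [Function.comp_apply, Set.mem_setOf_eq, decide_eq_true_eq]
    have hc2 : (B.toList.countP ((fun S => decide (v ∈ S ∧ w ∈ S)) ∘ (fun u => p ⁻¹' {u})))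
        = (B.filter (fun u => p v = u ∧ p w = u)).card := by
      rw [countP_toList_bool]
      apply congrArg Finset.card
      apply Finset.filter_congr
      intro u _
      simp only [Function.comp_apply, Set.mem_preimage, Set.mem_singleton_iff, decide_eq_true_eq]
    rw [hc1, hc2]
    by_cases hpq : p v = p w
    · -- within a part
      have e1 : P.filter (fun e => p v ∈ e ∧ p w ∈ e) = P.filter (fun e => p v ∈ e) := by
        apply Finset.filter_congr
        intro e _
        simp [← hpq]
      have e2 : B.filter (fun u => p v = u ∧ p w = u) = B.filter (fun u => u = p v) := by
        apply Finset.filter_congr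
        intro u _
        constructor
        · rintro ⟨h, _⟩; exact h.symm
        · rintro rfl; exact ⟨rfl, hpq.symm⟩
      rw [e1, e2, ← hpq]
      by_cases hu : p v ∈ B
      · have e3 : B.filter (fun u => u = p v) = {p v} := by
          ext u
          simp only [Finset.mem_filter, Finset.mem_singleton]
          exact ⟨fun h => h.2, fun h => ⟨h ▸ hu, h⟩⟩
        rw [e3, Finset.card_singleton]
        rw [hB, Finset.mem_filter] at hu
        have hx : Odd ((P.filter (fun e => p v ∈ e)).card + 1) ↔
            ¬ Odd ((P.filter (fun e => p v ∈ e)).card) := by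
          rw [Nat.odd_add_one, Nat.not_odd_iff_even]
        have hu2 := hu.2
        unfold Xor' Xor at hu2
        rw [hdeg] at hu2
        tauto
      · have e3 : B.filter (fun u => u = p v) = ∅ := by
          ext u
          simp only [Finset.mem_filter, Finset.notMem_empty, iff_false, not_and]
          rintro h1 rfl
          exact hu h1
        rw [e3, Finset.card_empty, add_zero]
        rw [hB, Finset.mem_filter] at hu
        have hu2 : ¬ Xor' (Odd (deg (p v))) (R (p v) (p v)) := fun h => hu ⟨Finset.mem_univ _, h⟩
        unfold Xor' Xor at hu2
        rw [hdeg] at hu2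
        tauto
    · -- across parts
      have e2 : B.filter (fun u => p v = u ∧ p w = u) = ∅ := by
        apply Finset.filter_false_of_mem
        rintro u _ ⟨h1, h2⟩
        exact hpq (h1.trans h2.symm)
      have hpair : ∀ e : Sym2 ι, p v ∈ e → p w ∈ e → e = s(p v, p w) := by
        intro e
        induction e using Sym2.ind with
        | _ x y =>
          simp only [Sym2.mem_iff]
          intro h1 h2
          rw [Sym2.eq_iff]
          rcases h1 with rfl | rfl
          · rcases h2 with h | rfl
            · exact absurd h.symm hpq
            · exact Or.inl ⟨rfl, rfl⟩
          · rcases h2 with rfl | h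
            · exact Or.inr ⟨rfl, rfl⟩
            · exact absurd h.symm hpq
      rw [e2, Finset.card_empty, add_zero]
      by_cases hr : R (p v) (p w)
      · have e1 : P.filter (fun e => p v ∈ e ∧ p w ∈ e) = {s(p v, p w)} := by
          ext e
          simp only [Finset.mem_filter, Finset.mem_singleton]
          constructor
          · rintro ⟨_, h1, h2⟩
            exact hpair e h1 h2
          · rintro rfl
            refine ⟨?_, by simp, by simp⟩
            rw [hP, Finset.mem_filter]
            exact ⟨Finset.mem_univ _, by simpa using hpq, Sym2.fromRel_prop.mpr hr⟩
        rw [e1, Finset.card_singleton]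
        simp [hr]
      · have e1 : P.filter (fun e => p v ∈ e ∧ p w ∈ e) = ∅ := by
          apply Finset.filter_false_of_mem
          rintro e he ⟨h1, h2⟩
          have := hpair e h1 h2
          subst this
          rw [hP, Finset.mem_filter] at he
          exact hr (Sym2.fromRel_prop.mp he.2.2)
        rw [e1, Finset.card_empty]
        simp [hr]
end

section
/- Let H be a finite simple graph obtained from a finite simple graph G by successively complementing on k subsets S₁, …, S_k of the vertex set of G. Then there exist a pattern R with at most 2^k nodes and a partition (V_u)_{u∈V(R)} of V(G) such that H = G^R. -/
section Aux

/-- GF(2) inner product. -/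
private def ip {k : ℕ} (u w : Fin k → ZMod 2) : ZMod 2 := ∑ i, u i * w i

private lemma ip_comm {k : ℕ} (u w : Fin k → ZMod 2) : ip u w = ip w u :=
  Finset.sum_congr rfl fun i _ => mul_comm _ _

private lemma ip_delta {k : ℕ} (u : Fin k → ZMod 2) (j : Fin k) :
    ip u (fun i => if i = j then 1 else 0) = u j := by
  simp [ip, mul_ite]

private lemma zmod2_cases (a : ZMod 2) : a = 0 ∨ a = 1 := by revert a; decide

private lemma zmod2_ne_one {a : ZMod 2} (h : ¬ a = 1) : a = 0 := by
  rcases zmod2_cases a with h0 | h1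
  · exact h0
  · exact absurd h1 h

private lemma isPattern_ip (k : ℕ) :
    IsPattern (fun u w : Fin k → ZMod 2 => ip u w = 1) := by
  constructor
  · intro u w h; rwa [ip_comm]
  · rintro u₁ u₂ hne htwin hbad
    apply hne
    have hedge : ip u₁ u₂ = ip u₁ u₁ ∧ ip u₁ u₂ = ip u₂ u₂ := by
      rcases hbad with ⟨h1, h2, h3⟩ | ⟨h1, h2, h3⟩
      · exact ⟨h1.trans h2.symm, h1.trans h3.symm⟩
      · rw [zmod2_ne_one h1, zmod2_ne_one h2, zmod2_ne_one h3]; exact ⟨rfl, rfl⟩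
    have key : ∀ w, ip u₁ w = ip u₂ w := by
      intro w
      by_cases hw1 : w = u₁
      · subst hw1; rw [ip_comm u₂ w, ← hedge.1]
      by_cases hw2 : w = u₂
      · subst hw2; exact hedge.2
      · have h := htwin w hw1 hw2
        rcases zmod2_cases (ip u₁ w) with h1 | h1 <;>
          rcases zmod2_cases (ip u₂ w) with h2 | h2 <;>
          simp_all
    funext j
    have h := key (fun i => if i = j then 1 else 0)
    rwa [ip_delta, ip_delta] at h

private lemma isPattern_comap {ι κ : Type*} (R : ι → ι → Prop) (e : κ ≃ ι)
    (h : IsPattern R) : IsPattern (fun a b => R (e a) (e b)) := by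
  obtain ⟨hs, ht⟩ := h
  refine ⟨fun a b hab => hs hab, ?_⟩
  intro a b hne htwin
  refine ht (e a) (e b) (fun h' => hne (e.injective h')) ?_
  intro w hw1 hw2
  have := htwin (e.symm w)
    (fun h' => hw1 (by rw [← e.apply_symm_apply w, h']))
    (fun h' => hw2 (by rw [← e.apply_symm_apply w, h']))
  simpa using this

open Classical in
private lemma foldl_adj {V : Type*} (L : List (Set V)) (G : SimpleGraph V) (v w : V)
    (hvw : v ≠ w) :
    (L.foldl complementOn G).Adj v w ↔
      Xor' (G.Adj v w)
        ((L.map fun S => if v ∈ S ∧ w ∈ S then (1 : ZMod 2) else 0).sum = 1) := by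
  classical
  induction L generalizing G with
  | nil => simp [Xor', Xor]
  | cons S L ih =>
    rw [List.foldl_cons, ih]
    have hc : (complementOn G S).Adj v w ↔ Xor' (G.Adj v w) (v ∈ S ∧ w ∈ S) := by
      simp [complementOn, hvw]
    rw [hc]
    simp only [List.map_cons, List.sum_cons]
    rcases zmod2_cases ((L.map fun S => if v ∈ S ∧ w ∈ S then (1 : ZMod 2) else 0).sum)
      with h | h <;> rw [h] <;>
      by_cases hS : v ∈ S ∧ w ∈ S <;> by_cases hG : G.Adj v w <;>
      simp [hS, hG, Xor'] <;> decide

end Aux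

/-- if `H` is obtained from `G` by successively complementing on `k`
subsets of `V(G)`, then there are a pattern `R` with at most `2^k` nodes and a partition
`(V_u)` of `V(G)` such that `H = G^R`. -/
theorem stmt11 {V : Type*} [Fintype V] (k : ℕ) (G : SimpleGraph V)
    (L : List (Set V)) (hL : L.length = k) :
    ∃ n : ℕ, n ≤ 2 ^ k ∧ ∃ (R : Fin n → Fin n → Prop) (p : V → Fin n),
      IsPattern R ∧ G.patternApply R p = L.foldl complementOn G := by
  classical
  subst hL
  refine ⟨2 ^ L.length, le_refl _, ?_⟩
  have hcard : Fintype.card (Fin L.length → ZMod 2) = 2 ^ L.length := by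
    simp [Fintype.card_fun]
  let e : (Fin L.length → ZMod 2) ≃ Fin (2 ^ L.length) :=
    Fintype.equivFinOfCardEq hcard
  refine ⟨fun a b => ip (e.symm a) (e.symm b) = 1,
    fun v => e (fun i => if v ∈ L.get i then (1 : ZMod 2) else 0), ?_, ?_⟩
  · exact isPattern_comap _ e.symm (isPattern_ip _)
  · ext v w
    by_cases hvw : v = w
    · subst hvw
      exact iff_of_false (SimpleGraph.irrefl _) (SimpleGraph.irrefl _)
    · rw [foldl_adj L G v w hvw]
      have hR : ∀ x y : V,
          ip (e.symm (e (fun i => if x ∈ L.get i then (1 : ZMod 2) else 0)))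
             (e.symm (e (fun i => if y ∈ L.get i then (1 : ZMod 2) else 0))) =
          ((L.map fun S => if x ∈ S ∧ y ∈ S then (1 : ZMod 2) else 0).sum) := by
        intro x y
        rw [e.symm_apply_apply, e.symm_apply_apply]
        have hmap : (L.map fun S => if x ∈ S ∧ y ∈ S then (1 : ZMod 2) else 0) =
            List.ofFn (fun i => if x ∈ L.get i ∧ y ∈ L.get i then (1 : ZMod 2) else 0) := by
          conv_lhs => rw [← List.ofFn_get L]
          rw [List.map_ofFn]
          rfl
        rw [hmap, List.sum_ofFn]
        refine Finset.sum_congr rfl fun i _ => ?_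
        by_cases h1 : x ∈ L.get i <;> by_cases h2 : y ∈ L.get i <;>
          simp only [List.get_eq_getElem] at h1 h2 <;> simp [h1, h2]
      show (v ≠ w ∧ Xor' (G.Adj v w)
          (ip (e.symm (e fun i => if v ∈ L.get i then (1 : ZMod 2) else 0))
              (e.symm (e fun i => if w ∈ L.get i then (1 : ZMod 2) else 0)) = 1 ∨
           ip (e.symm (e fun i => if w ∈ L.get i then (1 : ZMod 2) else 0))
              (e.symm (e fun i => if v ∈ L.get i then (1 : ZMod 2) else 0)) = 1)) ↔ _
      rw [hR v w, hR w v]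
      have hsym : (L.map fun S => if w ∈ S ∧ v ∈ S then (1 : ZMod 2) else 0) =
          (L.map fun S => if v ∈ S ∧ w ∈ S then (1 : ZMod 2) else 0) := by
        refine List.map_congr_left fun S _ => by
          by_cases h1 : v ∈ S <;> by_cases h2 : w ∈ S <;> simp [h1, h2]
      rw [hsym]
      simp [hvw, or_self]
end

section
/- Let G be a finite simple graph with maximum degree at most d, R a graph possibly with loops, and (V_u)_{u∈V(R)} a partition of V(G). Then any two vertices v and v' contained in the same part V_u satisfy |deg_{G^R}(v) − deg_{G^R}(v')| ≤ 2d. -/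
/-- if `G` has maximum degree at most `d`, then any two vertices lying in
the same part of the partition have degrees in `G^R` differing by at most `2d`. -/
theorem stmt13 {V ι : Type*} [Fintype V] (G : SimpleGraph V) (d : ℕ)
    (hdeg : ∀ v : V, (G.neighborSet v).ncard ≤ d)
    (R : ι → ι → Prop) (hR : Symmetric R) (p : V → ι)
    (v v' : V) (h : p v = p v') :
    ((((G.patternApply R p).neighborSet v).ncard : ℤ) -
        (((G.patternApply R p).neighborSet v').ncard : ℤ)).natAbs ≤ 2 * d := by
  classical
  set H := G.patternApply R p with hH
  set A := H.neighborSet v with hA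
  set B := H.neighborSet v' with hB
  -- Key subset lemmas
  have hsub : ∀ x y : V, p x = p y →
      (H.neighborSet x \ {y}) \ (H.neighborSet y \ {x}) ⊆
        G.neighborSet x ∪ G.neighborSet y := by
    intro x y hxy w hw
    obtain ⟨⟨hwA, hwy⟩, hw2⟩ := hw
    simp only [Set.mem_singleton_iff] at hwy
    by_contra hcon
    simp only [Set.mem_union, SimpleGraph.mem_neighborSet] at hcon
    push_neg at hcon
    obtain ⟨hgx, hgy⟩ := hcon
    have hwx : w ≠ x := fun e => (H.irrefl (e ▸ hwA))
    apply hw2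
    refine ⟨?_, by simpa using hwx⟩
    have hAdj : x ≠ w ∧ Xor' (G.Adj x w) (R (p x) (p w) ∨ R (p w) (p x)) := hwA
    obtain ⟨hne, hxor⟩ := hAdj
    have hP : R (p x) (p w) ∨ R (p w) (p x) := by
      rcases hxor with ⟨ha, _⟩ | ⟨hb, _⟩
      · exact absurd ha hgx
      · exact hb
    show y ≠ w ∧ Xor' (G.Adj y w) (R (p y) (p w) ∨ R (p w) (p y))
    refine ⟨fun e => hwy e.symm, Or.inr ⟨by rwa [← hxy], hgy⟩⟩
  have hsub1 := hsub v v' h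
  have hsub2 := hsub v' v h.symm
  -- cardinality of the symmetric-difference pieces
  have hc1 : ((A \ {v'}) \ (B \ {v})).ncard ≤ 2 * d := by
    calc ((A \ {v'}) \ (B \ {v})).ncard ≤ (G.neighborSet v ∪ G.neighborSet v').ncard :=
          Set.ncard_le_ncard hsub1 (Set.toFinite _)
      _ ≤ (G.neighborSet v).ncard + (G.neighborSet v').ncard := Set.ncard_union_le _ _
      _ ≤ d + d := Nat.add_le_add (hdeg v) (hdeg v')
      _ = 2 * d := by ring
  have hc2 : ((B \ {v}) \ (A \ {v'})).ncard ≤ 2 * d := by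
    calc ((B \ {v}) \ (A \ {v'})).ncard ≤ (G.neighborSet v' ∪ G.neighborSet v).ncard :=
          Set.ncard_le_ncard hsub2 (Set.toFinite _)
      _ ≤ (G.neighborSet v').ncard + (G.neighborSet v).ncard := Set.ncard_union_le _ _
      _ ≤ d + d := Nat.add_le_add (hdeg v') (hdeg v)
      _ = 2 * d := by ring
  have e1 : (A \ {v'}).ncard ≤ ((A \ {v'}) \ (B \ {v})).ncard + (B \ {v}).ncard :=
    Set.ncard_le_ncard_diff_add_ncard _ _ (Set.toFinite _)
  have e2 : (B \ {v}).ncard ≤ ((B \ {v}) \ (A \ {v'})).ncard + (A \ {v'}).ncard :=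
    Set.ncard_le_ncard_diff_add_ncard _ _ (Set.toFinite _)
  -- relate A, B to A \ {v'}, B \ {v}
  have hmemiff : v' ∈ A ↔ v ∈ B := by
    simp only [hA, hB, SimpleGraph.mem_neighborSet]
    exact ⟨fun hh => hh.symm, fun hh => hh.symm⟩
  by_cases hv' : v' ∈ A
  · have hv : v ∈ B := hmemiff.mp hv'
    have ha : (A \ {v'}).ncard = A.ncard - 1 := Set.ncard_diff_singleton_of_mem hv'
    have hb : (B \ {v}).ncard = B.ncard - 1 := Set.ncard_diff_singleton_of_mem hv
    have hap : 1 ≤ A.ncard := (Set.ncard_pos (Set.toFinite _)).mpr ⟨v', hv'⟩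
    have hbp : 1 ≤ B.ncard := (Set.ncard_pos (Set.toFinite _)).mpr ⟨v, hv⟩
    omega
  · have hv : v ∉ B := fun hh => hv' (hmemiff.mpr hh)
    have ha : A \ {v'} = A := by simp [Set.diff_singleton_eq_self hv']
    have hb : B \ {v} = B := by simp [Set.diff_singleton_eq_self hv]
    rw [ha, hb] at e1 e2 hc1 hc2
    omega
end
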